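/- Let g ≥ 1 and let t = (t₁,…,t_g) ∈ ℂ^g be such that the polynomial ∏_{j=1}^g (u − t_j) has all its coefficients real. Define the power sums p_k = Σ_{j=1}^g t_j^k for k ≥ 0 (these are real numbers under the hypothesis), and let B be the g×g real matrix with entries B_{i,j} = p_{i+j−2} for 1 ≤ i, j ≤ g. Then B is positive definite if and only if all the t_j are real and pairwise distinct. -/

import Mathlib

open Polynomial

open Matrix Finset

private lemma bez_quad (g : ℕ) (t : Fin g → ℂ) (B : Matrix (Fin g) (Fin g) ℝ)
    (hB : ∀ i j : Fin g, ((B i j : ℝ) : ℂ) = ∑ l : Fin g, t l ^ ((i : ℕ) + (j : ℕ)))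
    (x : Fin g → ℝ) :
    ((x ⬝ᵥ B *ᵥ x : ℝ) : ℂ) = ∑ l, (∑ i, (x i : ℂ) * t l ^ (i : ℕ)) ^ 2 := by
  simp only [dotProduct, Matrix.mulVec]
  push_cast
  simp_rw [hB]
  simp_rw [Finset.sum_mul, Finset.mul_sum, sq, Finset.sum_mul_sum]
  rw [show (∑ i : Fin g, ∑ j : Fin g, ∑ l : Fin g,
      ((x i : ℂ) * (t l ^ ((i:ℕ) + (j:ℕ)) * (x j : ℂ)))) =
      ∑ l : Fin g, ∑ i : Fin g, ∑ j : Fin g,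
      ((x i : ℂ) * (t l ^ ((i:ℕ) + (j:ℕ)) * (x j : ℂ))) from by
    rw [show (∑ i : Fin g, ∑ j : Fin g, ∑ l : Fin g,
      ((x i : ℂ) * (t l ^ ((i:ℕ) + (j:ℕ)) * (x j : ℂ)))) =
      ∑ i : Fin g, ∑ l : Fin g, ∑ j : Fin g,
      ((x i : ℂ) * (t l ^ ((i:ℕ) + (j:ℕ)) * (x j : ℂ))) from
      Finset.sum_congr rfl fun i _ => by rw [Finset.sum_comm]]
    rw [Finset.sum_comm]]
  refine Finset.sum_congr rfl fun l _ => Finset.sum_congr rfl fun i _ =>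
    Finset.sum_congr rfl fun j _ => ?_
  rw [pow_add]; ring

/-- Sylvester's criterion via the bezoutian: let `t ∈ ℂ^g` be such that the monic
polynomial `∏ (u − t_j)` has real coefficients, and let `B` be the real `g×g` Hankel
matrix of the power sums, `B i j = p_{i+j}` (`0`-indexed), where `p_k = Σ_l t_l^k`.
Then `B` is positive definite iff all the `t_j` are real and pairwise distinct. -/
theorem bezoutian_posDef_iff (g : ℕ) (hg : 1 ≤ g) (t : Fin g → ℂ)
    (hreal : ∀ n : ℕ, ((∏ j : Fin g, (X - C (t j)) : ℂ[X]).coeff n).im = 0)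
    (B : Matrix (Fin g) (Fin g) ℝ)
    (hB : ∀ i j : Fin g, ((B i j : ℝ) : ℂ) = ∑ l : Fin g, t l ^ ((i : ℕ) + (j : ℕ))) :
    B.PosDef ↔ ((∀ j : Fin g, (t j).im = 0) ∧ Function.Injective t) := by
  constructor
  · intro hPD
    -- injectivity from det
    have hdet : (0:ℝ) < B.det := hPD.det_pos
    have hmap : (Complex.ofRealHom).mapMatrix B = (vandermonde t)ᵀ * vandermonde t := by
      ext i j
      simp only [RingHom.mapMatrix_apply, Matrix.map_apply, Matrix.mul_apply,
        Matrix.transpose_apply, Matrix.vandermonde_apply]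
      rw [show Complex.ofRealHom (B i j) = ((B i j : ℝ) : ℂ) from rfl, hB]
      exact Finset.sum_congr rfl fun l _ => pow_add _ _ _
    have hdetC : ((B.det : ℝ) : ℂ) = (vandermonde t).det ^ 2 := by
      rw [show ((B.det : ℝ):ℂ) = Complex.ofRealHom B.det from rfl, RingHom.map_det, hmap,
        Matrix.det_mul, Matrix.det_transpose, sq]
    have hVdet : (vandermonde t).det ≠ 0 := by
      intro h
      have h0 : ((B.det : ℝ) : ℂ) = 0 := by rw [hdetC, h]; ring
      exact absurd (Complex.ofReal_eq_zero.mp h0) (ne_of_gt hdet)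
    have hinj : Function.Injective t := Matrix.det_vandermonde_ne_zero_iff.mp hVdet
    refine ⟨?_, hinj⟩
    by_contra him
    push_neg at him
    obtain ⟨a, ha⟩ := him
    -- conjugates of roots are roots
    have hroot : ∀ l : Fin g, ∃ m, t m = (starRingEnd ℂ) (t l) := by
      intro l
      set P : ℂ[X] := ∏ j : Fin g, (X - C (t j)) with hP
      have hconj : ∀ z : ℂ, P.eval ((starRingEnd ℂ) z) = (starRingEnd ℂ) (P.eval z) := by
        intro z
        rw [eval_eq_sum_range, eval_eq_sum_range, map_sum]
        refine Finset.sum_congr rfl fun n _ => ?_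
        rw [_root_.map_mul, map_pow, Complex.conj_eq_iff_im.mpr (hreal n)]
      have h0 : P.eval (t l) = 0 := by
        rw [hP, eval_prod]
        exact Finset.prod_eq_zero (Finset.mem_univ l) (by simp)
      have h1 : P.eval ((starRingEnd ℂ) (t l)) = 0 := by rw [hconj, h0, map_zero]
      rw [hP, eval_prod] at h1
      obtain ⟨m, -, hm⟩ := Finset.prod_eq_zero_iff.mp h1
      refine ⟨m, ?_⟩
      simp only [eval_sub, eval_X, eval_C, sub_eq_zero] at hm
      exact hm.symm
    obtain ⟨b, hb⟩ := hroot a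
    have hba : b ≠ a := by
      intro h
      rw [h] at hb
      exact ha (Complex.conj_eq_iff_im.mp hb.symm)
    set V := vandermonde t with hV
    set u : Fin g → ℂ := V⁻¹ *ᵥ Pi.single a 1 with hu
    have hVu : V *ᵥ u = Pi.single a 1 := by
      rw [hu, Matrix.mulVec_mulVec, Matrix.mul_nonsing_inv _ (isUnit_iff_ne_zero.mpr hVdet),
        Matrix.one_mulVec]
    have hVu' : ∀ l, ∑ i : Fin g, t l ^ (i:ℕ) * u i = if l = a then 1 else 0 := by
      intro l
      have := congrFun hVu l
      simpa [Matrix.mulVec, dotProduct, hV, Matrix.vandermonde_apply,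
        Pi.single_apply] using this
    have hVu'' : ∀ l, ∑ i : Fin g, t l ^ (i:ℕ) * (starRingEnd ℂ) (u i) = if l = b then 1 else 0 := by
      intro l
      obtain ⟨m, hm⟩ := hroot l
      have h1 := congrArg (starRingEnd ℂ) (hVu' m)
      rw [map_sum] at h1
      have h2 : ∀ i : Fin g, (starRingEnd ℂ) (t m ^ (i:ℕ) * u i)
          = t l ^ (i:ℕ) * (starRingEnd ℂ) (u i) := by
        intro i
        rw [_root_.map_mul, map_pow, hm]
        simp
      rw [Finset.sum_congr rfl fun i _ => h2 i] at h1
      rw [h1]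
      by_cases hma : m = a
      · have hlb : l = b := by
          apply hinj
          rw [hb, ← hma, hm]
          simp
        simp [hma, hlb]
      · have hlb : l ≠ b := by
          intro h
          apply hma
          apply hinj
          rw [hm, h, hb]
          simp
        simp [hma, hlb]
    set x : Fin g → ℝ := fun i => (u i).im with hx
    have hSx : ∀ l, (2 * Complex.I) * (∑ i, (x i : ℂ) * t l ^ (i:ℕ))
        = (if l = a then 1 else 0) - (if l = b then 1 else 0) := by
      intro l
      rw [Finset.mul_sum, ← hVu' l, ← hVu'' l, ← Finset.sum_sub_distrib]
      refine Finset.sum_congr rfl fun i _ => ?_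
      have h3 : u i - (starRingEnd ℂ) (u i) = ((2 * (u i).im : ℝ) : ℂ) * Complex.I :=
        Complex.sub_conj _
      push_cast at h3
      simp only [hx]
      linear_combination (-(t l ^ (i:ℕ))) * h3
    have hxne : x ≠ 0 := by
      intro h
      have h2 := hSx a
      rw [h] at h2
      simp only [Pi.zero_apply, Complex.ofReal_zero, zero_mul, Finset.sum_const_zero,
        mul_zero, if_pos rfl, if_neg (Ne.symm hba), sub_zero] at h2
      exact zero_ne_one h2
    have hqneg : ((x ⬝ᵥ B *ᵥ x : ℝ) : ℂ) = -(1/2) := by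
      rw [bez_quad g t B hB x]
      have key : ∀ l, (∑ i, (x i : ℂ) * t l ^ (i:ℕ)) ^ 2
          = -(1/4) * ((if l = a then 1 else 0) - (if l = b then 1 else 0))^2 := by
        intro l
        have h1 := hSx l
        have h2 : (2 * Complex.I) ^ 2 * (∑ i, (x i : ℂ) * t l ^ (i:ℕ)) ^ 2
            = ((if l = a then 1 else 0) - (if l = b then 1 else 0))^2 := by
          rw [← mul_pow, h1]
        have h3 : (2 * Complex.I)^2 = -4 := by
          rw [mul_pow, Complex.I_sq]; norm_num
        rw [h3] at h2
        linear_combination (-(1:ℂ)/4) * h2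
      rw [Finset.sum_congr rfl fun l _ => key l, ← Finset.mul_sum]
      have hsum : ∑ l : Fin g, ((if l = a then (1:ℂ) else 0) - (if l = b then 1 else 0))^2
          = 2 := by
        have : ∀ l : Fin g, ((if l = a then (1:ℂ) else 0) - (if l = b then 1 else 0))^2
            = (if l = a then 1 else 0) + (if l = b then 1 else 0) := by
          intro l
          by_cases h1 : l = a <;> by_cases h2 : l = b
          · exact absurd (h2 ▸ h1) hba
          · simp [h1, h2, hba, Ne.symm hba]
          · simp [h1, h2, hba, Ne.symm hba]
          · simp [h1, h2]
        rw [Finset.sum_congr rfl fun l _ => this l, Finset.sum_add_distrib]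
        simp only [Finset.sum_ite_eq', Finset.mem_univ, if_true]
        norm_num
      rw [hsum]
      norm_num
    have hpos : 0 < x ⬝ᵥ B *ᵥ x := by
      have := hPD.dotProduct_mulVec_pos hxne
      simpa [star_trivial] using this
    have : (x ⬝ᵥ B *ᵥ x : ℝ) = -(1/2) := by
      have := hqneg
      rw [show (-(1/2) : ℂ) = ((-(1/2) : ℝ) : ℂ) by push_cast; ring] at this
      exact_mod_cast this
    linarith
  · rintro ⟨hre, hinj⟩
    set r : Fin g → ℝ := fun j => (t j).re with hr
    have htr : ∀ j, ((r j : ℝ) : ℂ) = t j := by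
      intro j
      apply Complex.ext <;> simp [hr, hre j]
    have rinj : Function.Injective r := by
      intro i j h
      apply hinj
      rw [← htr, ← htr, h]
    rw [Matrix.posDef_iff_dotProduct_mulVec]
    constructor
    · ext i j
      simp only [Matrix.conjTranspose_apply, star_trivial]
      have := hB i j
      rw [Nat.add_comm] at this
      rw [← hB j i] at this
      exact_mod_cast this.symm
    · intro y hy
      have hq : y ⬝ᵥ B *ᵥ y = ∑ l, (∑ i, y i * r l ^ (i:ℕ))^2 := by
        apply Complex.ofReal_inj.mp
        rw [bez_quad g t B hB y]
        push_cast
        refine Finset.sum_congr rfl fun l _ => ?_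
        congr 1
        refine Finset.sum_congr rfl fun i _ => ?_
        rw [htr]
      have h0 : star y ⬝ᵥ B *ᵥ y = y ⬝ᵥ B *ᵥ y := by simp [star_trivial]
      rw [h0, hq]
      have hnn : ∀ l ∈ Finset.univ, (0:ℝ) ≤ (∑ i, y i * r l ^ (i:ℕ))^2 :=
        fun l _ => sq_nonneg _
      rcases (Finset.sum_nonneg hnn).lt_or_eq with h | h
      · exact h
      · exfalso
        have hz : ∀ l : Fin g, ∑ i, y i * r l ^ (i:ℕ) = 0 := by
          intro l
          have := (Finset.sum_eq_zero_iff_of_nonneg hnn).mp h.symm l (Finset.mem_univ l)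
          exact pow_eq_zero_iff (by norm_num) |>.mp this
        have hmv : vandermonde r *ᵥ y = 0 := by
          ext l
          simp only [Matrix.mulVec, dotProduct, Matrix.vandermonde_apply, Pi.zero_apply]
          rw [← hz l]
          exact Finset.sum_congr rfl fun i _ => mul_comm _ _
        exact hy (Matrix.eq_zero_of_mulVec_eq_zero
          (Matrix.det_vandermonde_ne_zero_iff.mpr rinj) hmv)
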